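/- The entropy diffusion matrix is positive semidefinite: at every admissible state q of the 2D Euler equations and for every diagonal matrix |Λ| = diag(λ₁, λ₂, λ₃, λ₄) with nonnegative entries, the matrix Q := R |Λ| S Rᵀ is symmetric and positive semidefinite; if all λᵢ are strictly positive then Q is positive definite. -/

import Mathlib

open Real Matrix

noncomputable section

/-- A state of the 2D compressible Euler equations: `(ρ, ρu, ρv, E)`. -/
abbrev EulerState := Fin 4 → ℝ

/-- Density. -/
def rho (q : EulerState) : ℝ := q 0
/-- x-momentum. -/
def mom1 (q : EulerState) : ℝ := q 1
/-- y-momentum. -/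
def mom2 (q : EulerState) : ℝ := q 2
/-- Total energy. -/
def toten (q : EulerState) : ℝ := q 3
/-- Pressure `p = (γ-1)(E - (m₁² + m₂²)/(2ρ))`. -/
def pres (γ : ℝ) (q : EulerState) : ℝ :=
  (γ - 1) * (toten q - (mom1 q ^ 2 + mom2 q ^ 2) / (2 * rho q))
/-- x-velocity `u = m₁/ρ`. -/
def uvel (q : EulerState) : ℝ := mom1 q / rho q
/-- y-velocity `v = m₂/ρ`. -/
def vvel (q : EulerState) : ℝ := mom2 q / rho q
/-- Admissible states: positive density and positive pressure. -/
def admissible (γ : ℝ) (q : EulerState) : Prop := 0 < rho q ∧ 0 < pres γ q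
/-- Physical entropy `s = ln(p ρ^(-γ))`. -/
def entS (γ : ℝ) (q : EulerState) : ℝ := Real.log (pres γ q * rho q ^ (-γ))
/-- Entropy function `U = -ρ s/(γ-1)`. -/
def entU (γ : ℝ) (q : EulerState) : ℝ := -(rho q * entS γ q) / (γ - 1)
/-- `β = ρ/(2p)`. -/
def betaCoef (γ : ℝ) (q : EulerState) : ℝ := rho q / (2 * pres γ q)
/-- Entropy variables `r(q)`. -/
def entVar (γ : ℝ) (q : EulerState) : EulerState :=
  ![(γ - entS γ q) / (γ - 1) - betaCoef γ q * (uvel q ^ 2 + vvel q ^ 2),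
    2 * betaCoef γ q * uvel q,
    2 * betaCoef γ q * vvel q,
    -2 * betaCoef γ q]
/-- x-flux `f(q)`. -/
def fFlux (γ : ℝ) (q : EulerState) : EulerState :=
  ![rho q * uvel q,
    rho q * uvel q ^ 2 + pres γ q,
    rho q * uvel q * vvel q,
    (toten q + pres γ q) * uvel q]
/-- y-flux `g(q)`. -/
def gFlux (γ : ℝ) (q : EulerState) : EulerState :=
  ![rho q * vvel q,
    rho q * uvel q * vvel q,
    rho q * vvel q ^ 2 + pres γ q,
    (toten q + pres γ q) * vvel q]
/-- x-entropy flux `φₓ = -ρ u s/(γ-1)`. -/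
def phiX (γ : ℝ) (q : EulerState) : ℝ := -(rho q * uvel q * entS γ q) / (γ - 1)
/-- y-entropy flux `φ_y = -ρ v s/(γ-1)`. -/
def phiY (γ : ℝ) (q : EulerState) : ℝ := -(rho q * vvel q * entS γ q) / (γ - 1)

/-- Logarithmic mean `(b-a)/(ln b - ln a)`, equal to `a` when `a = b`. -/
def logMean (a b : ℝ) : ℝ := if a = b then a else (b - a) / (Real.log b - Real.log a)

/-- The entropy conservative flux of Chandrashekar. -/
def chandrashekarFlux (γ : ℝ) (qm qp : EulerState) : EulerState :=
  let ρhat := logMean (rho qm) (rho qp)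
  let ubar := (uvel qm + uvel qp) / 2
  let vbar := (vvel qm + vvel qp) / 2
  let βbar := (betaCoef γ qm + betaCoef γ qp) / 2
  let βhat := logMean (betaCoef γ qm) (betaCoef γ qp)
  let ρbar := (rho qm + rho qp) / 2
  let ptil := ρbar / (2 * βbar)
  let vsqbar := (uvel qm ^ 2 + vvel qm ^ 2 + uvel qp ^ 2 + vvel qp ^ 2) / 2
  let Fρ := ρhat * ubar
  let Fρu := ubar * Fρ + ptil
  let Fρv := vbar * Fρ
  ![Fρ, Fρu, Fρv,
    (1 / (2 * (γ - 1) * βhat) - vsqbar / 2) * Fρ + ubar * Fρu + vbar * Fρv]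

/-- Speed of sound `c = √(γ p/ρ)`. -/
def cSound (γ : ℝ) (q : EulerState) : ℝ := Real.sqrt (γ * pres γ q / rho q)
/-- Enthalpy `H = c²/(γ-1) + |v|²/2`. -/
def enthalpyH (γ : ℝ) (q : EulerState) : ℝ :=
  cSound γ q ^ 2 / (γ - 1) + (uvel q ^ 2 + vvel q ^ 2) / 2
/-- The matrix `R` of right eigenvectors of the x-flux Jacobian. -/
def eigMat (γ : ℝ) (q : EulerState) : Matrix (Fin 4) (Fin 4) ℝ :=
  !![1, 1, 0, 1;
     uvel q - cSound γ q, uvel q, 0, uvel q + cSound γ q;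
     vvel q, vvel q, -1, vvel q;
     enthalpyH γ q - cSound γ q * uvel q, (uvel q ^ 2 + vvel q ^ 2) / 2, -vvel q,
       enthalpyH γ q + cSound γ q * uvel q]
/-- Barth's scaling matrix `S = diag(ρ/(2γ), (γ-1)ρ/γ, p, ρ/(2γ))`. -/
def scalMat (γ : ℝ) (q : EulerState) : Matrix (Fin 4) (Fin 4) ℝ :=
  Matrix.diagonal ![rho q / (2 * γ), (γ - 1) * rho q / γ, pres γ q, rho q / (2 * γ)]

/-- Entropy diffusion matrix `Q = R |Λ| S Rᵀ` for a diagonal `|Λ| = diag lam`. -/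
def Qmat (γ : ℝ) (lam : Fin 4 → ℝ) (q : EulerState) : Matrix (Fin 4) (Fin 4) ℝ :=
  eigMat γ q * Matrix.diagonal lam * scalMat γ q * (eigMat γ q)ᵀ

/-- Roe eigenvalues `(|u-c|, |u|, |u|, |u+c|)`. -/
def lamRoe (γ : ℝ) (q : EulerState) : Fin 4 → ℝ :=
  ![|uvel q - cSound γ q|, |uvel q|, |uvel q|, |uvel q + cSound γ q|]
/-- Kinetic energy stable eigenvalues `(|u|+c, |u|, |u|, |u|+c)`. -/
def lamKES (γ : ℝ) (q : EulerState) : Fin 4 → ℝ :=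
  ![|uvel q| + cSound γ q, |uvel q|, |uvel q|, |uvel q| + cSound γ q]
/-- Local Mach number `M = |v|/c`. -/
def machNum (γ : ℝ) (q : EulerState) : ℝ :=
  Real.sqrt (uvel q ^ 2 + vvel q ^ 2) / cSound γ q
/-- Rescaled speed of sound `c̃ = c max(min(M,1), M_cut)`. -/
def cTilde (γ Mcut : ℝ) (q : EulerState) : ℝ :=
  cSound γ q * max (min (machNum γ q) 1) Mcut
/-- Low Mach Roe eigenvalues `(|u-c̃|, |u|, |u|, |u+c̃|)`. -/
def lamRoeLM (γ Mcut : ℝ) (q : EulerState) : Fin 4 → ℝ :=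
  ![|uvel q - cTilde γ Mcut q|, |uvel q|, |uvel q|, |uvel q + cTilde γ Mcut q|]
/-- Low Mach KES eigenvalues `(|u|+c̃, |u|, |u|, |u|+c̃)`. -/
def lamKESLM (γ Mcut : ℝ) (q : EulerState) : Fin 4 → ℝ :=
  ![|uvel q| + cTilde γ Mcut q, |uvel q|, |uvel q|, |uvel q| + cTilde γ Mcut q]


private lemma det_fin_four' (A : Matrix (Fin 4) (Fin 4) ℝ) :
    A.det =
      A 0 0 * (A 1 1 * A 2 2 * A 3 3 - A 1 1 * A 2 3 * A 3 2 - A 1 2 * A 2 1 * A 3 3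
        + A 1 2 * A 2 3 * A 3 1 + A 1 3 * A 2 1 * A 3 2 - A 1 3 * A 2 2 * A 3 1)
      - A 0 1 * (A 1 0 * A 2 2 * A 3 3 - A 1 0 * A 2 3 * A 3 2 - A 1 2 * A 2 0 * A 3 3
        + A 1 2 * A 2 3 * A 3 0 + A 1 3 * A 2 0 * A 3 2 - A 1 3 * A 2 2 * A 3 0)
      + A 0 2 * (A 1 0 * A 2 1 * A 3 3 - A 1 0 * A 2 3 * A 3 1 - A 1 1 * A 2 0 * A 3 3
        + A 1 1 * A 2 3 * A 3 0 + A 1 3 * A 2 0 * A 3 1 - A 1 3 * A 2 1 * A 3 0)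
      - A 0 3 * (A 1 0 * A 2 1 * A 3 2 - A 1 0 * A 2 2 * A 3 1 - A 1 1 * A 2 0 * A 3 2
        + A 1 1 * A 2 2 * A 3 0 + A 1 2 * A 2 0 * A 3 1 - A 1 2 * A 2 1 * A 3 0) := by
  rw [Matrix.det_succ_row_zero]
  simp [Fin.sum_univ_succ, Matrix.det_fin_three, Fin.succAbove,
    show (Fin.succ 2 : Fin 4) = 3 from rfl, show (Fin.castSucc 2 : Fin 4) = 2 from rfl]
  ring

set_option maxHeartbeats 1000000 in
private lemma det_eigMat (γ : ℝ) (hγ : 1 < γ) (q : EulerState) :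
    (eigMat γ q).det = -2 * cSound γ q ^ 3 / (γ - 1) := by
  have h1 : γ - 1 ≠ 0 := by linarith
  rw [det_fin_four']
  simp [eigMat, enthalpyH]
  field_simp
  ring

private lemma conj_posDef (B : Matrix (Fin 4) (Fin 4) ℝ) (d : Fin 4 → ℝ)
    (hd : ∀ i, 0 < d i) (hB : B.det ≠ 0) :
    (B * Matrix.diagonal d * Bᵀ).PosDef := by
  have hsemi : (B * Matrix.diagonal d * Bᵀ).PosSemidef := by
    have := (Matrix.posSemidef_diagonal_iff.mpr fun i => (hd i).le).mul_mul_conjTranspose_same B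
    simpa [Matrix.conjTranspose_eq_transpose_of_trivial] using this
  refine .of_dotProduct_mulVec_pos hsemi.isHermitian fun x hx => ?_
  have hBT : Function.Injective (Bᵀ).mulVec := by
    rw [Matrix.mulVec_injective_iff_isUnit, Matrix.isUnit_iff_isUnit_det,
      Matrix.det_transpose]
    exact (isUnit_iff_ne_zero).mpr hB
  have hy : (Bᵀ).mulVec x ≠ 0 := fun h => hx (hBT (by simpa using h))
  have h2 := (Matrix.PosDef.diagonal hd).dotProduct_mulVec_pos hy
  calc (0:ℝ) < star ((Bᵀ).mulVec x) ⬝ᵥ (Matrix.diagonal d).mulVec ((Bᵀ).mulVec x) := h2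
    _ = star x ⬝ᵥ (B * Matrix.diagonal d * Bᵀ).mulVec x := by
        simp only [star_trivial, Matrix.dotProduct_mulVec, Matrix.mulVec_transpose,
          Matrix.vecMul_vecMul]
        rw [← Matrix.vecMul_vecMul, ← Matrix.dotProduct_mulVec]
        simp [Matrix.vecMul_diagonal, Matrix.mulVec_diagonal, dotProduct,
          Fin.sum_univ_four, Matrix.vecMul, Matrix.mulVec, Matrix.mul_apply]
        ring

/-- the entropy diffusion matrix `Q = R |Λ| S Rᵀ` is symmetric and
positive semidefinite for any nonnegative diagonal `|Λ|`, and positive definite if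
all diagonal entries are strictly positive. -/
theorem entropy_diffusion_matrix_posSemidef (γ : ℝ) (hγ : 1 < γ) (q : EulerState)
    (hq : admissible γ q) (lam : Fin 4 → ℝ) (hlam : ∀ i, 0 ≤ lam i) :
    (Qmat γ lam q).IsSymm ∧ (Qmat γ lam q).PosSemidef ∧
      ((∀ i, 0 < lam i) → (Qmat γ lam q).PosDef) := by
  obtain ⟨hρ, hp⟩ := hq
  have hγ1 : (0:ℝ) < γ - 1 := by linarith
  have hγ0 : (0:ℝ) < γ := by linarith
  have hc : 0 < cSound γ q := Real.sqrt_pos.mpr (by positivity)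
  have hdet : (eigMat γ q).det ≠ 0 := by
    rw [det_eigMat γ hγ q]
    have h3 : 0 < 2 * cSound γ q ^ 3 / (γ - 1) := by positivity
    intro h
    rw [show (-2 : ℝ) * cSound γ q ^ 3 / (γ - 1) = -(2 * cSound γ q ^ 3 / (γ - 1)) by ring] at h
    linarith
  set s : Fin 4 → ℝ := ![rho q / (2 * γ), (γ - 1) * rho q / γ, pres γ q, rho q / (2 * γ)]
    with hs_def
  have hs : ∀ i, 0 < s i := by
    intro i
    fin_cases i <;> simp [hs_def] <;> positivity
  have hQ : Qmat γ lam q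
      = eigMat γ q * Matrix.diagonal (lam * s) * (eigMat γ q)ᵀ := by
    rw [Qmat, scalMat, Matrix.mul_assoc (eigMat γ q), Matrix.diagonal_mul_diagonal, hs_def]
    rfl
  have hsemi : (Qmat γ lam q).PosSemidef := by
    rw [hQ]
    have := (Matrix.posSemidef_diagonal_iff.mpr
      fun i => mul_nonneg (hlam i) (hs i).le).mul_mul_conjTranspose_same (eigMat γ q)
    simpa [Matrix.conjTranspose_eq_transpose_of_trivial, Pi.mul_def] using this
  refine ⟨?_, hsemi, fun hpos => ?_⟩
  · rw [Matrix.IsSymm, ← Matrix.conjTranspose_eq_transpose_of_trivial]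
    exact hsemi.isHermitian
  · rw [hQ]
    exact conj_posDef _ _ (fun i => mul_pos (hpos i) (hs i)) hdet
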